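/- arXiv:1007.1309 — 4 statements merged into one kernel-verified Lean document; each statement's English description precedes it below -/
import Mathlib

section
/- For any real constants λ₁, λ₂, the function x(t) = ((1 + 2t λ₁)(λ₂ - 1)) / (t(λ₂ - 1) + t² λ₁(λ₂ - 1) + (λ₁ - 1) λ₂) is a solution of x'' + 3 x x' + x^3 = 0 at every point t where the denominator is nonzero. -/
section aux

variable (l1 l2 : ℝ)

private noncomputable def Nf (l1 l2 s : ℝ) : ℝ := (1 + 2 * s * l1) * (l2 - 1)
private noncomputable def Df (l1 l2 s : ℝ) : ℝ :=
  s * (l2 - 1) + s ^ 2 * l1 * (l2 - 1) + (l1 - 1) * l2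

private lemma hasDerivAt_Nf (s : ℝ) :
    HasDerivAt (Nf l1 l2) (2 * l1 * (l2 - 1)) s := by
  have h : HasDerivAt (fun s : ℝ => (1 + 2 * s * l1) * (l2 - 1))
      ((2 * l1) * (l2 - 1)) s := by
    have h1 : HasDerivAt (fun s : ℝ => 1 + 2 * s * l1) (2 * l1) s := by
      have := ((hasDerivAt_id s).const_mul (2 : ℝ)).mul_const l1
      simpa [mul_comm, mul_assoc, mul_left_comm] using this.const_add 1
    exact h1.mul_const _
  exact h

private lemma hasDerivAt_Df (s : ℝ) :
    HasDerivAt (Df l1 l2) ((l2 - 1) + 2 * s * l1 * (l2 - 1)) s := by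
  have h1 : HasDerivAt (fun s : ℝ => s * (l2 - 1)) (l2 - 1) s := by
    simpa using (hasDerivAt_id s).mul_const (l2 - 1)
  have h2 : HasDerivAt (fun s : ℝ => s ^ 2 * l1 * (l2 - 1)) (2 * s * l1 * (l2 - 1)) s := by
    have := ((hasDerivAt_pow 2 s).mul_const l1).mul_const (l2 - 1)
    simpa [mul_comm, mul_assoc, mul_left_comm] using this
  have := (h1.add h2).add_const ((l1 - 1) * l2)
  exact this

private noncomputable def gf (l1 l2 s : ℝ) : ℝ :=
  (2 * l1 * (l2 - 1) * Df l1 l2 s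
    - Nf l1 l2 s * ((l2 - 1) + 2 * s * l1 * (l2 - 1))) / (Df l1 l2 s) ^ 2

private lemma hasDerivAt_x (s : ℝ) (hs : Df l1 l2 s ≠ 0) :
    HasDerivAt (fun s => Nf l1 l2 s / Df l1 l2 s) (gf l1 l2 s) s :=
  (hasDerivAt_Nf l1 l2 s).div (hasDerivAt_Df l1 l2 s) hs

private lemma cont_Df : Continuous (Df l1 l2) := by
  unfold Df; fun_prop

end aux

theorem stmt_3 (l1 l2 : ℝ) :
    ∀ t : ℝ,
      t * (l2 - 1) + t ^ 2 * l1 * (l2 - 1) + (l1 - 1) * l2 ≠ 0 →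
      deriv (deriv (fun s : ℝ =>
          ((1 + 2 * s * l1) * (l2 - 1)) /
            (s * (l2 - 1) + s ^ 2 * l1 * (l2 - 1) + (l1 - 1) * l2))) t
        + 3 * (((1 + 2 * t * l1) * (l2 - 1)) /
            (t * (l2 - 1) + t ^ 2 * l1 * (l2 - 1) + (l1 - 1) * l2)) *
          deriv (fun s : ℝ =>
            ((1 + 2 * s * l1) * (l2 - 1)) /
              (s * (l2 - 1) + s ^ 2 * l1 * (l2 - 1) + (l1 - 1) * l2)) t
        + (((1 + 2 * t * l1) * (l2 - 1)) /
            (t * (l2 - 1) + t ^ 2 * l1 * (l2 - 1) + (l1 - 1) * l2)) ^ 3 = 0 := by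
  intro t ht
  have ht' : Df l1 l2 t ≠ 0 := ht
  have hx : (fun s : ℝ =>
      ((1 + 2 * s * l1) * (l2 - 1)) /
        (s * (l2 - 1) + s ^ 2 * l1 * (l2 - 1) + (l1 - 1) * l2))
      = fun s => Nf l1 l2 s / Df l1 l2 s := rfl
  rw [hx]
  -- first derivative value
  have hd1 : deriv (fun s => Nf l1 l2 s / Df l1 l2 s) t = gf l1 l2 t :=
    (hasDerivAt_x l1 l2 t ht').deriv
  -- deriv x agrees with gf near t
  have hopen : IsOpen {s : ℝ | Df l1 l2 s ≠ 0} :=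
    isOpen_compl_iff.mpr (isClosed_singleton.preimage (cont_Df l1 l2))
  have hmem : {s : ℝ | Df l1 l2 s ≠ 0} ∈ nhds t := hopen.mem_nhds ht'
  have heq : deriv (fun s => Nf l1 l2 s / Df l1 l2 s) =ᶠ[nhds t] gf l1 l2 := by
    filter_upwards [hmem] with s hs
    exact (hasDerivAt_x l1 l2 s hs).deriv
  -- derivative of gf at t
  have hnum : HasDerivAt (fun s => 2 * l1 * (l2 - 1) * Df l1 l2 s
      - Nf l1 l2 s * ((l2 - 1) + 2 * s * l1 * (l2 - 1)))
      (2 * l1 * (l2 - 1) * ((l2 - 1) + 2 * t * l1 * (l2 - 1))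
        - (2 * l1 * (l2 - 1) * ((l2 - 1) + 2 * t * l1 * (l2 - 1))
            + Nf l1 l2 t * (2 * l1 * (l2 - 1)))) t := by
    have hA := (hasDerivAt_Df l1 l2 t).const_mul (2 * l1 * (l2 - 1))
    have hd2 : HasDerivAt (fun s : ℝ => (l2 - 1) + 2 * s * l1 * (l2 - 1))
        (2 * l1 * (l2 - 1)) t := by
      have := (((hasDerivAt_id t).const_mul (2:ℝ)).mul_const l1).mul_const (l2 - 1)
      simpa [mul_comm, mul_assoc, mul_left_comm] using this.const_add (l2 - 1)
    have hB := (hasDerivAt_Nf l1 l2 t).mul hd2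
    exact hA.sub hB
  have hden : HasDerivAt (fun s => (Df l1 l2 s) ^ 2)
      (2 * Df l1 l2 t * ((l2 - 1) + 2 * t * l1 * (l2 - 1))) t := by
    have := (hasDerivAt_Df l1 l2 t).fun_pow 2
    simpa [mul_comm, mul_assoc, mul_left_comm] using this
  have hden2 : (Df l1 l2 t) ^ 2 ≠ 0 := pow_ne_zero _ ht'
  have hg : HasDerivAt (gf l1 l2)
      (((2 * l1 * (l2 - 1) * ((l2 - 1) + 2 * t * l1 * (l2 - 1))
        - (2 * l1 * (l2 - 1) * ((l2 - 1) + 2 * t * l1 * (l2 - 1))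
            + Nf l1 l2 t * (2 * l1 * (l2 - 1)))) * (Df l1 l2 t) ^ 2
        - (2 * l1 * (l2 - 1) * Df l1 l2 t
            - Nf l1 l2 t * ((l2 - 1) + 2 * t * l1 * (l2 - 1)))
          * (2 * Df l1 l2 t * ((l2 - 1) + 2 * t * l1 * (l2 - 1))))
        / ((Df l1 l2 t) ^ 2) ^ 2) t := hnum.div hden hden2
  have hd2val : deriv (deriv (fun s => Nf l1 l2 s / Df l1 l2 s)) t
      = deriv (gf l1 l2) t := heq.deriv_eq
  rw [hd2val, hg.deriv, hd1, gf]
  show _ + 3 * (Nf l1 l2 t / Df l1 l2 t) * _ + (Nf l1 l2 t / Df l1 l2 t) ^ 3 = 0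
  have hN : Nf l1 l2 t = (1 + 2 * t * l1) * (l2 - 1) := rfl
  have hDval : Df l1 l2 t = t * (l2 - 1) + t ^ 2 * l1 * (l2 - 1) + (l1 - 1) * l2 := rfl
  rw [hN, hDval] at *
  field_simp
  ring
end

section
/- Let X₄ = x ∂/∂x − 2x² ∂/∂v and X₅ = (v + 2x²) ∂/∂x − x(v + 3x²) ∂/∂v on ℝ². Then [X₄, X₅] = −X₁, where X₁ = v ∂/∂x − (3xv + x³) ∂/∂v. -/
noncomputable def lieBracketVF (X Y : ℝ × ℝ → ℝ × ℝ) : ℝ × ℝ → ℝ × ℝ :=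
  fun p => fderiv ℝ Y p (X p) - fderiv ℝ X p (Y p)

theorem stmt_7 :
    lieBracketVF (fun p : ℝ × ℝ => (p.1, -2 * p.1 ^ 2))
        (fun p : ℝ × ℝ => (p.2 + 2 * p.1 ^ 2, -p.1 * (p.2 + 3 * p.1 ^ 2)))
      = fun p : ℝ × ℝ => -(p.2, -(3 * p.1 * p.2 + p.1 ^ 3)) := by
  funext p
  simp only [lieBracketVF, pow_two]
  have hf : HasFDerivAt (Prod.fst : ℝ × ℝ → ℝ) (ContinuousLinearMap.fst ℝ ℝ ℝ) p :=
    hasFDerivAt_fst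
  have hs : HasFDerivAt (Prod.snd : ℝ × ℝ → ℝ) (ContinuousLinearMap.snd ℝ ℝ ℝ) p :=
    hasFDerivAt_snd
  have hx2 := hf.mul hf
  have hX := hf.prodMk (hx2.const_mul (-2))
  have hY := ((hs.add (hx2.const_mul 2)).prodMk
    ((hf.neg).mul (hs.add (hx2.const_mul 3))))
  simp only [Pi.mul_apply, Pi.add_apply, Pi.neg_apply] at hX hY
  rw [hX.fderiv, hY.fderiv]
  simp [Prod.ext_iff]
  ring
end

section
/- With F_{abc}(t) defined from five solutions x₀,…,x₄ of x'' + 3 x x' + x³ = 0 as F_{abc} = x_a'(x_c − x_b) + x_b'(x_a − x_c) + x_c'(x_b − x_a) + (x_a − x_b)(x_b − x_c)(x_c − x_a), the function Λ₂(t) = (F₄₃₁(t)·F₄₂₀(t))/(F₄₂₁(t)·F₄₃₀(t)) is constant on any interval where the denominator never vanishes. -/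
theorem stmt_15
    (I : Set ℝ) (hI : IsOpen I) (hconn : IsPreconnected I)
    (x v : Fin 5 → ℝ → ℝ)
    (hx : ∀ a, ∀ t ∈ I, HasDerivAt (x a) (v a t) t)
    (hv : ∀ a, ∀ t ∈ I,
      HasDerivAt (v a) (-(3 * x a t * v a t + x a t ^ 3)) t)
    (F : Fin 5 → Fin 5 → Fin 5 → ℝ → ℝ)
    (hF : ∀ a b c, ∀ t : ℝ,
      F a b c t = v a t * (x c t - x b t) + v b t * (x a t - x c t)
        + v c t * (x b t - x a t)
        + (x a t - x b t) * (x b t - x c t) * (x c t - x a t))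
    (hden : ∀ t ∈ I, F 4 2 1 t * F 4 3 0 t ≠ 0) :
    ∀ s ∈ I, ∀ t ∈ I,
      F 4 3 1 s * F 4 2 0 s / (F 4 2 1 s * F 4 3 0 s)
        = F 4 3 1 t * F 4 2 0 t / (F 4 2 1 t * F 4 3 0 t) := by
  -- Key derivative identity: F' = -(x_a + x_b + x_c) * F
  have key : ∀ a b c : Fin 5, ∀ t ∈ I,
      HasDerivAt (F a b c) (-(x a t + x b t + x c t) * F a b c t) t := by
    intro a b c t ht
    have heq : F a b c = fun u => v a u * (x c u - x b u) + v b u * (x a u - x c u)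
        + v c u * (x b u - x a u)
        + (x a u - x b u) * (x b u - x c u) * (x c u - x a u) := funext (hF a b c)
    rw [heq]
    have h : HasDerivAt (fun u => v a u * (x c u - x b u) + v b u * (x a u - x c u)
        + v c u * (x b u - x a u)
        + (x a u - x b u) * (x b u - x c u) * (x c u - x a u)) _ t := ((((hv a t ht).mul ((hx c t ht).sub (hx b t ht))).add
        ((hv b t ht).mul ((hx a t ht).sub (hx c t ht)))).add
        ((hv c t ht).mul ((hx b t ht).sub (hx a t ht)))).add
        ((((hx a t ht).sub (hx b t ht)).mul ((hx b t ht).sub (hx c t ht))).mul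
          ((hx c t ht).sub (hx a t ht)))
    convert h using 1
    try simp only [hF]
    simp only [Pi.mul_apply, Pi.sub_apply]
    ring
  set g : ℝ → ℝ := fun u => F 4 3 1 u * F 4 2 0 u / (F 4 2 1 u * F 4 3 0 u) with hg
  have hg0 : ∀ t ∈ I, HasDerivAt g 0 t := by
    intro t ht
    have hN := (key 4 3 1 t ht).mul (key 4 2 0 t ht)
    have hD := (key 4 2 1 t ht).mul (key 4 3 0 t ht)
    have h : HasDerivAt g _ t := hN.div hD (hden t ht)
    convert h using 1
    symm
    rw [div_eq_zero_iff]
    left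
    simp only [Pi.mul_apply]
    ring
  -- local constancy
  have hloc : ∀ u ∈ I, ∃ ε > 0, Metric.ball u ε ⊆ I ∧
      ∀ y ∈ Metric.ball u ε, g y = g u := by
    intro u hu
    obtain ⟨ε, hε, hball⟩ := Metric.isOpen_iff.1 hI u hu
    refine ⟨ε, hε, hball, fun y hy => ?_⟩
    have hcon := (convex_ball u ε).norm_image_sub_le_of_norm_hasDerivWithin_le
      (f := g) (f' := fun _ => (0 : ℝ)) (C := 0)
      (fun z hz => (hg0 z (hball hz)).hasDerivWithinAt)
      (fun z _ => by simp) (Metric.mem_ball_self hε) hy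
    have := hcon
    rw [zero_mul] at this
    have h0 : ‖g y - g u‖ ≤ 0 := this
    have : g y - g u = 0 := norm_le_zero_iff.mp h0
    linarith [this]
  intro s hs t ht
  set U : Set ℝ := {u | u ∈ I ∧ g u = g s} with hU
  set V : Set ℝ := {u | u ∈ I ∧ g u ≠ g s} with hV
  have hUopen : IsOpen U := by
    rw [isOpen_iff_mem_nhds]
    intro u hu
    obtain ⟨ε, hε, hball, hconst⟩ := hloc u hu.1
    apply Filter.mem_of_superset (Metric.ball_mem_nhds u hε)
    intro y hy
    exact ⟨hball hy, by rw [hconst y hy, hu.2]⟩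
  have hVopen : IsOpen V := by
    rw [isOpen_iff_mem_nhds]
    intro u hu
    obtain ⟨ε, hε, hball, hconst⟩ := hloc u hu.1
    apply Filter.mem_of_superset (Metric.ball_mem_nhds u hε)
    intro y hy
    exact ⟨hball hy, by rw [hconst y hy]; exact hu.2⟩
  have hdisj : Disjoint U V := by
    rw [Set.disjoint_iff]
    rintro z ⟨⟨_, h1⟩, ⟨_, h2⟩⟩
    exact absurd h1 h2
  have hsub : I ⊆ U ∪ V := by
    intro z hz
    by_cases h : g z = g s
    · exact Or.inl ⟨hz, h⟩
    · exact Or.inr ⟨hz, h⟩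
  have hne : (I ∩ U).Nonempty := ⟨s, hs, hs, rfl⟩
  have hIU : I ⊆ U := hconn.subset_left_of_subset_union hUopen hVopen hdisj hsub hne
  exact ((hIU ht).2).symm
end

section
/- Suppose a₃(t) > 0 is differentiable, and set b₀(t) = a₂(t)/√(a₃(t)) − ȧ₃(t)/(2a₃(t)) and b₁(t) = 3√(a₃(t)). If x(t) solves the second-order Riccati equation ẍ + (b₀(t) + b₁(t) x) ẋ + a₀(t) + a₁(t) x + a₂(t) x² + a₃(t) x³ = 0, then the pair (x'(t), v'(t)) = (x(t), ẋ(t)/√(a₃(t))) solves the system ẋ' = √(a₃(t)) v', v̇' = −a₀(t)/√(a₃(t)) − √(a₃(t))(3 v' x' + x'³) − (a₁(t)/√(a₃(t))) x' − (a₂(t)/√(a₃(t)))(v' + x'²). -/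
theorem stmt_19
    (a0 a1 a2 : ℝ → ℝ)
    (ha0 : Continuous a0) (ha1 : Continuous a1) (ha2 : Continuous a2)
    (a3 a3d : ℝ → ℝ) (ha3pos : ∀ t, 0 < a3 t)
    (ha3 : ∀ t, HasDerivAt a3 (a3d t) t)
    (b0 b1 : ℝ → ℝ)
    (hb0 : ∀ t, b0 t = a2 t / Real.sqrt (a3 t) - a3d t / (2 * a3 t))
    (hb1 : ∀ t, b1 t = 3 * Real.sqrt (a3 t))
    (x xd xdd : ℝ → ℝ)
    (hx : ∀ t, HasDerivAt x (xd t) t)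
    (hxd : ∀ t, HasDerivAt xd (xdd t) t)
    (heq : ∀ t, xdd t + (b0 t + b1 t * x t) * xd t + a0 t + a1 t * x t
      + a2 t * x t ^ 2 + a3 t * x t ^ 3 = 0) :
    ∀ t, HasDerivAt x (Real.sqrt (a3 t) * (xd t / Real.sqrt (a3 t))) t ∧
      HasDerivAt (fun s => xd s / Real.sqrt (a3 s))
        (-(a0 t / Real.sqrt (a3 t))
          - Real.sqrt (a3 t) * (3 * (xd t / Real.sqrt (a3 t)) * x t + x t ^ 3)
          - (a1 t / Real.sqrt (a3 t)) * x t
          - (a2 t / Real.sqrt (a3 t)) * (xd t / Real.sqrt (a3 t) + x t ^ 2)) t := by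
  intro t
  have hs : 0 < Real.sqrt (a3 t) := Real.sqrt_pos.mpr (ha3pos t)
  have hs0 : Real.sqrt (a3 t) ≠ 0 := ne_of_gt hs
  have ha0' : a3 t ≠ 0 := ne_of_gt (ha3pos t)
  have hsq : Real.sqrt (a3 t) ^ 2 = a3 t := Real.sq_sqrt (ha3pos t).le
  constructor
  · rw [mul_div_cancel₀ _ hs0]; exact hx t
  · have hsd : HasDerivAt (fun s => Real.sqrt (a3 s)) (a3d t / (2 * Real.sqrt (a3 t))) t :=
      (ha3 t).sqrt ha0'
    have hdiv : HasDerivAt (fun s => xd s / Real.sqrt (a3 s)) _ t := (hxd t).div hsd hs0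
    convert hdiv using 1
    have het := heq t
    rw [hb0 t, hb1 t] at het
    have hxdd : xdd t = -((a2 t / Real.sqrt (a3 t) - a3d t / (2 * a3 t)
        + 3 * Real.sqrt (a3 t) * x t) * xd t + a0 t + a1 t * x t
        + a2 t * x t ^ 2 + a3 t * x t ^ 3) := by linarith
    rw [hxdd]
    obtain ⟨s, hsval, hs2, hsne⟩ : ∃ s, Real.sqrt (a3 t) = s ∧ a3 t = s ^ 2 ∧ s ≠ 0 :=
      ⟨Real.sqrt (a3 t), rfl, hsq.symm, hs0⟩
    rw [hsval, hs2]
    field_simp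
    ring
end
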